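/- arXiv:0907.1879 — 3 statements merged into one kernel-verified Lean document; each statement's English description precedes it below -/
import Mathlib

section
/- Every finite group all of whose Sylow subgroups are either cyclic or generalized quaternion contains no subgroup S of order > 1 such that |S| is a perfect square and S admits a nondegenerate 2-cocycle (i.e., S is of central type with |S| = m² and the twisted group algebra ℂ_α S is isomorphic to M_m(ℂ)); in particular, binary polyhedral groups admit no nontrivial cocycle deformation. -/
lemma zmod_two_mul_eq_zero {n : ℕ} [NeZero n] (k : ZMod (2*n)) (h : k + k = 0) :
    k = 0 ∨ k = (n : ZMod (2*n)) := by
  haveI : NeZero (2*n) := ⟨by have := NeZero.ne n; omega⟩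
  have hcast : ((k.val : ℕ) : ZMod (2*n)) = k := by
    rw [ZMod.natCast_val, ZMod.cast_id]
  have hv : ((k.val + k.val : ℕ) : ZMod (2*n)) = 0 := by
    push_cast
    rw [hcast]; exact h
  rw [ZMod.natCast_eq_zero_iff] at hv
  have hlt := ZMod.val_lt k
  have hnd : n ∣ k.val := by
    have h2 : 2 * n ∣ 2 * k.val := by rw [two_mul k.val]; exact hv
    exact (mul_dvd_mul_iff_left (two_ne_zero)).mp h2
  obtain ⟨d, hd⟩ := hnd
  have hd2 : d < 2 := by
    apply Nat.lt_of_mul_lt_mul_left (a := n)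
    omega
  have : k.val = 0 ∨ k.val = n := by interval_cases d <;> omega
  rcases this with h0 | h0
  · left; rw [← hcast, h0]; simp
  · right; rw [← hcast, h0]

open QuaternionGroup


lemma isCyclic_zpowers {G : Type*} [Group G] (g : G) : IsCyclic (Subgroup.zpowers g) := by
  refine ⟨⟨⟨g, Subgroup.mem_zpowers g⟩, fun x => ?_⟩⟩
  obtain ⟨k, hk⟩ := Subgroup.mem_zpowers_iff.mp x.2
  exact ⟨k, Subtype.ext (by simpa using hk)⟩

lemma quat_comm_mem {n : ℕ} [NeZero n] (i : ZMod (2*n)) (y : QuaternionGroup n)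
    (h : Commute (xa i) y) : y ∈ Subgroup.zpowers (xa i) := by
  have hxsq : (xa i)^2 = a (n : ZMod (2*n)) := xa_sq i
  cases y with
  | a k =>
    have h1 : xa (i + k) = xa (i - k) := by
      have := h.eq
      rwa [xa_mul_a, a_mul_xa] at this
    have h2 : i + k = i - k := by injection h1
    have h3 : k + k = 0 := by linear_combination h2
    rcases zmod_two_mul_eq_zero k h3 with h0 | h0
    · rw [h0, ← one_def]; exact Subgroup.one_mem _
    · rw [h0]; exact ⟨2, by exact_mod_cast hxsq⟩
  | xa k =>
    have h1 : a ((n : ZMod (2*n)) + k - i) = a ((n : ZMod (2*n)) + i - k) := by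
      have := h.eq
      rwa [xa_mul_xa, xa_mul_xa] at this
    have h2 : (n : ZMod (2*n)) + k - i = (n : ZMod (2*n)) + i - k := by injection h1
    have h3 : (k - i) + (k - i) = 0 := by linear_combination h2
    rcases zmod_two_mul_eq_zero _ h3 with h0 | h0
    · have : k = i := by linear_combination h0
      rw [this]; exact ⟨1, by simp⟩
    · have hk : k = i + (n : ZMod (2*n)) := by linear_combination h0
      have h2n : (n : ZMod (2*n)) + (n : ZMod (2*n)) = 0 := by
        have : ((2*n : ℕ) : ZMod (2*n)) = 0 := ZMod.natCast_self _
        push_cast at this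
        linear_combination this
      have h3 : (xa i)^3 = xa (i + (n : ZMod (2*n))) := by
        rw [pow_succ, hxsq, a_mul_xa]
        congr 1
        linear_combination -h2n
      rw [hk, ← h3]; exact ⟨3, by exact_mod_cast rfl⟩

lemma quat_ab_cyclic {n : ℕ} [NeZero n] (H : Subgroup (QuaternionGroup n))
    (hH : ∀ x ∈ H, ∀ y ∈ H, x * y = y * x) : IsCyclic H := by
  by_cases hx : ∃ i, xa i ∈ H
  · obtain ⟨i, hi⟩ := hx
    have hle : H ≤ Subgroup.zpowers (xa i) := by
      intro y hy
      exact quat_comm_mem i y (hH (xa i) hi y hy)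
    haveI := isCyclic_zpowers (xa i : QuaternionGroup n)
    exact Subgroup.isCyclic_of_le hle
  · push_neg at hx
    have hle : H ≤ Subgroup.zpowers (a 1) := by
      intro y hy
      cases y with
      | a k =>
        refine ⟨(k.val : ℤ), ?_⟩
        show (a 1 : QuaternionGroup n) ^ (k.val : ℤ) = a k
        rw [zpow_natCast, a_one_pow]
        congr 1
        rw [ZMod.natCast_val, ZMod.cast_id]
      | xa k => exact absurd hy (hx k)
    haveI := isCyclic_zpowers (a 1 : QuaternionGroup n)
    exact Subgroup.isCyclic_of_le hle



lemma ab_cyclic {G : Type*} [Group G] [Finite G]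
    (hSyl : ∀ (p : ℕ) [Fact p.Prime] (P : Sylow p G),
      IsCyclic P ∨ ∃ j : ℕ, 1 ≤ j ∧ Nonempty (P ≃* QuaternionGroup (2 ^ j)))
    (A : Subgroup G) (hA : ∀ x ∈ A, ∀ y ∈ A, x * y = y * x) : IsCyclic A := by
  letI : CommGroup A := { (inferInstance : Group A) with
    mul_comm := fun a b => Subtype.ext (hA a a.2 b b.2) }
  apply IsCyclic.of_exponent_eq_card
  have hcard : Nat.card A ≠ 0 := Nat.card_pos.ne'
  have hexp : Monoid.exponent A ≠ 0 :=
    Monoid.ExponentExists.exponent_ne_zero Monoid.ExponentExists.of_finite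
  apply Nat.dvd_antisymm Group.exponent_dvd_nat_card
  rw [← Nat.factorization_le_iff_dvd hcard hexp]
  intro p
  by_cases hp : p.Prime
  swap
  · simp [Nat.factorization_eq_zero_of_not_prime _ hp]
  haveI : Fact p.Prime := ⟨hp⟩
  -- the Sylow p-subgroup of A is cyclic
  obtain ⟨P⟩ : Nonempty (Sylow p A) := inferInstance
  have hPcyc : IsCyclic P := by
    set K : Subgroup G := (P : Subgroup A).map A.subtype with hK
    have hKA : K ≤ A := by
      rintro x ⟨y, _, rfl⟩; exact y.2
    have hKp : IsPGroup p K := P.isPGroup'.map A.subtype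
    obtain ⟨Q, hQ⟩ := hKp.exists_le_sylow
    have hKcyc : IsCyclic K := by
      rcases hSyl p Q with hc | ⟨j, hj, ⟨e⟩⟩
      · exact Subgroup.isCyclic_of_le hQ
      · -- transport into the quaternion group
        haveI : NeZero (2 ^ j) := ⟨pow_ne_zero _ two_ne_zero⟩
        set K' : Subgroup (Q : Subgroup G) := K.subgroupOf Q with hK'
        set K'' : Subgroup (QuaternionGroup (2 ^ j)) := K'.map e.toMonoidHom with hK''
        have hab : ∀ x ∈ K'', ∀ y ∈ K'', x * y = y * x := by
          rintro x ⟨x', hx', rfl⟩ y ⟨y', hy', rfl⟩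
          rw [← map_mul, ← map_mul]
          congr 1
          have hx'' : ((x' : (Q : Subgroup G)) : G) ∈ K := hx'
          have hy'' : ((y' : (Q : Subgroup G)) : G) ∈ K := hy'
          apply Subtype.ext
          push_cast
          exact hA _ (hKA hx'') _ (hKA hy'')
        haveI hK''cyc : IsCyclic K'' := quat_ab_cyclic K'' hab
        have e1 : K' ≃* K'' := Subgroup.equivMapOfInjective K' e.toMonoidHom e.injective
        have e2 : K.subgroupOf Q ≃* K := Subgroup.subgroupOfEquivOfLe hQ
        haveI : IsCyclic K' := isCyclic_of_surjective e1.symm e1.symm.surjective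
        exact isCyclic_of_surjective e2 e2.surjective
    have e3 : (P : Subgroup A) ≃* K :=
      Subgroup.equivMapOfInjective _ A.subtype A.subtype_injective
    exact isCyclic_of_surjective e3.symm e3.symm.surjective
  obtain ⟨g, hg⟩ := hPcyc.exists_ofOrder_eq_natCard
  have hgA : orderOf ((g : A)) = p ^ (Nat.card A).factorization p := by
    rw [← P.card_eq_multiplicity, ← hg]
    exact orderOf_injective (P : Subgroup A).subtype (P : Subgroup A).subtype_injective g
  calc (Nat.card A).factorization p
      ≤ (Nat.factorization (p ^ (Nat.card A).factorization p)) p := by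
        rw [Nat.Prime.factorization_pow hp]; simp
    _ ≤ (Monoid.exponent A).factorization p := by
        apply (Nat.factorization_le_iff_dvd (pow_ne_zero _ hp.pos.ne') hexp).mpr ?_ p
        rw [← hgA]
        exact Monoid.order_dvd_exponent _


lemma cocycle_pow_comm {H : Type*} [Group H] (α : H → H → ℂˣ)
    (hc : ∀ a b c : H, α a b * α (a * b) c = α b c * α a (b * c))
    (g : H) (i j : ℕ) : α (g ^ i) (g ^ j) = α (g ^ j) (g ^ i) := by
  have hone : ∀ x : H, α 1 x = α 1 1 := by
    intro x
    have := hc 1 1 x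
    rw [one_mul, one_mul] at this
    exact (mul_right_cancel this).symm
  set F : ℕ → ℂˣ := fun n => ∏ k ∈ Finset.range n, α g (g ^ k) with hF
  have key : ∀ i j : ℕ, α (g ^ i) (g ^ j) * (F i * F j) = α 1 1 * F (i + j) := by
    intro i
    induction i with
    | zero =>
      intro j
      simp only [pow_zero, hF, Finset.range_zero, Finset.prod_empty, one_mul, zero_add]
      rw [hone (g ^ j)]
    | succ i ih =>
      intro j
      have hcoc := hc g (g ^ i) (g ^ j)
      have hgp : g * g ^ i = g ^ (i + 1) := (pow_succ' g i).symm
      have hgq : g ^ i * g ^ j = g ^ (i + j) := (pow_add g i j).symm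
      rw [hgp, hgq] at hcoc
      have hFs : F (i + 1) = F i * α g (g ^ i) := by
        simp [hF, Finset.prod_range_succ, mul_comm]
      have hFs2 : F (i + j + 1) = F (i + j) * α g (g ^ (i + j)) := by
        simp [hF, Finset.prod_range_succ, mul_comm]
      have step1 : α (g ^ (i + 1)) (g ^ j) * (F (i + 1) * F j)
          = (α g (g ^ i) * α (g ^ (i + 1)) (g ^ j)) * (F i * F j) := by
        rw [hFs]; simp [mul_comm, mul_left_comm, mul_assoc]
      have hidx : i + 1 + j = i + j + 1 := by omega
      rw [step1, hcoc, hidx, hFs2]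
      have step2 : α (g ^ i) (g ^ j) * α g (g ^ (i + j)) * (F i * F j)
          = α g (g ^ (i + j)) * (α (g ^ i) (g ^ j) * (F i * F j)) := by
        simp [mul_comm, mul_left_comm, mul_assoc]
      rw [step2, ih j]
      simp [mul_comm, mul_left_comm, mul_assoc]
  have h1 := key i j
  have h2 := key j i
  rw [add_comm j i] at h2
  have h3 := h1.trans h2.symm
  rw [mul_comm (F i) (F j)] at h3
  exact mul_right_cancel h3

/-- If every Sylow subgroup of a finite group `G` is cyclic or generalized
quaternion, then `G` has no nontrivial subgroup `S` of square order admitting a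
nondegenerate 2-cocycle `α` (i.e. no nontrivial subgroup of central type); here
nondegeneracy is expressed by the standard criterion that the identity is the only
`α`-regular element: for every `s ≠ 1` there is a `t` commuting with `s` such that
`α(s,t) ≠ α(t,s)`.  In particular binary polyhedral groups (whose Sylow subgroups are
cyclic or generalized quaternion) admit no nontrivial cocycle deformation. -/
theorem stmt_6 (G : Type*) [Group G] [Finite G]
    (hSyl : ∀ (p : ℕ) [Fact p.Prime] (P : Sylow p G),
      IsCyclic P ∨ ∃ j : ℕ, 1 ≤ j ∧ Nonempty (P ≃* QuaternionGroup (2 ^ j)))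
    (S : Subgroup G) (m : ℕ) (hm : Nat.card S = m ^ 2)
    (α : S → S → ℂˣ)
    (hcocycle : ∀ a b c : S, α a b * α (a * b) c = α b c * α a (b * c))
    (hnondeg : ∀ s : S, s ≠ 1 → ∃ t : S, Commute s t ∧ α s t ≠ α t s) :
    Nat.card S = 1 := by
  suffices hS1 : ∀ s : S, s = 1 by
    have hbot : S = ⊥ := (Subgroup.eq_bot_iff_forall S).mpr
      (fun x hx => congrArg Subtype.val (hS1 ⟨x, hx⟩))
    rw [hbot]
    exact Subgroup.card_bot
  intro s
  by_contra hs
  obtain ⟨t, hcomm, hne⟩ := hnondeg s hs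
  have hst : (s : G) * (t : G) = (t : G) * (s : G) := by
    exact_mod_cast congrArg Subtype.val hcomm.eq
  set A : Subgroup G := Subgroup.closure {(s : G), (t : G)} with hAdef
  have hgen1 : A ≤ Subgroup.centralizer {(s : G), (t : G)} := by
    rw [hAdef, Subgroup.closure_le]
    rintro x (rfl | rfl) <;> rw [SetLike.mem_coe, Subgroup.mem_centralizer_iff] <;>
      rintro h (rfl | rfl) <;> first | rfl | exact hst | exact hst.symm
  have hgen2 : A ≤ Subgroup.centralizer (A : Set G) := by
    rw [hAdef, Subgroup.closure_le]
    rintro x (rfl | rfl) <;> rw [SetLike.mem_coe, Subgroup.mem_centralizer_iff] <;>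
      intro h hh <;> have := Subgroup.mem_centralizer_iff.mp (hgen1 hh)
    · exact (this _ (Set.mem_insert _ _)).symm
    · exact (this _ (Set.mem_insert_of_mem _ rfl)).symm
  have hA : ∀ x ∈ A, ∀ y ∈ A, x * y = y * x := by
    intro x hx y hy
    exact (Subgroup.mem_centralizer_iff.mp (hgen2 hx) y hy).symm
  have hcyc : IsCyclic A := ab_cyclic hSyl A hA
  obtain ⟨gA, hgA⟩ := hcyc.exists_generator
  have hAS : A ≤ S := by
    rw [hAdef, Subgroup.closure_le]
    rintro x (rfl | rfl)
    · exact s.2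
    · exact t.2
  have hsA : (s : G) ∈ A := Subgroup.subset_closure (Set.mem_insert _ _)
  have htA : (t : G) ∈ A := Subgroup.subset_closure (Set.mem_insert_of_mem _ rfl)
  have hfin : IsOfFinOrder gA := isOfFinOrder_of_finite gA
  obtain ⟨i, hi⟩ := (Submonoid.mem_powers_iff _ _).mp
    (hfin.mem_powers_iff_mem_zpowers.mpr (hgA ⟨(s : G), hsA⟩))
  obtain ⟨j, hj⟩ := (Submonoid.mem_powers_iff _ _).mp
    (hfin.mem_powers_iff_mem_zpowers.mpr (hgA ⟨(t : G), htA⟩))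
  set h : S := ⟨(gA : G), hAS gA.2⟩ with hhdef
  have hseq : s = h ^ i := by
    apply Subtype.ext
    have := congrArg Subtype.val hi
    push_cast at this ⊢
    exact this.symm
  have hteq : t = h ^ j := by
    apply Subtype.ext
    have := congrArg Subtype.val hj
    push_cast at this ⊢
    exact this.symm
  apply hne
  rw [hseq, hteq]
  exact cocycle_pow_comm α hcocycle h i j
end

section
/- Let H be a finite-dimensional algebra over an algebraically closed field k of characteristic zero that decomposes as a crossed product k^Γ # kℤ_m (a smash product of the function algebra on a finite group Γ with the group algebra of ℤ/m acting on Γ by automorphisms). Then every irreducible H-module has dimension dividing m. -/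
/-- Let `H` be an algebra over an algebraically closed field `k` of
characteristic zero which decomposes as a crossed (smash) product `k^Γ # k ℤ_m`: there is
an algebra map `ι : k^Γ → H`, a group of units `u : ℤ/m → Hˣ` implementing the action `θ`
of `ℤ/m` on `Γ` (covariance relation), such that `H` is freely spanned by the `u j` over
`ι(k^Γ)`.  Then every irreducible `H`-module has `k`-dimension dividing `m`. -/
theorem stmt_12 (k : Type*) [Field k] [IsAlgClosed k] [CharZero k]
    (Γ : Type*) [Group Γ] [Fintype Γ] (m : ℕ) [NeZero m]
    (θ : Multiplicative (ZMod m) →* MulAut Γ)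
    (H : Type*) [Ring H] [Algebra k H]
    (ι : (Γ → k) →ₐ[k] H) (u : Multiplicative (ZMod m) →* Hˣ)
    (hcov : ∀ (j : Multiplicative (ZMod m)) (f : Γ → k),
      (u j : H) * ι f = ι (f ∘ ⇑((θ j)⁻¹)) * (u j : H))
    (hfree : Function.Bijective (fun F : ZMod m → (Γ → k) =>
      ∑ j : ZMod m, ι (F j) * ((u (Multiplicative.ofAdd j)) : H)))
    (M : Type*) [AddCommGroup M] [Module k M] [Module H M] [IsScalarTower k H M]
    (hsimple : IsSimpleModule H M) :
    Module.finrank k M ∣ m := by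
  classical
  haveI : SMulCommClass k H M :=
    ⟨fun a b x => by
      rw [← algebraMap_smul H a x, ← mul_smul, ← Algebra.commutes, mul_smul, algebraMap_smul]⟩
  -- the idempotents
  set e : Γ → H := fun s => ι (Pi.single s 1) with he_def
  have hsingle : ∀ s t : Γ, (Pi.single s 1 : Γ → k) * Pi.single t 1
      = if s = t then Pi.single s 1 else 0 := by
    intro s t
    funext x
    simp only [Pi.mul_apply, Pi.single_apply]
    split_ifs with h1 h2 h3 <;> simp_all [Pi.single_apply]
  have he_mul : ∀ s t : Γ, e s * e t = if s = t then e s else 0 := by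
    intro s t
    simp only [he_def, ← map_mul, hsingle]
    split_ifs <;> simp
  have he_sum : ∑ s : Γ, e s = 1 := by
    simp only [he_def, ← map_sum]
    have : ∑ s : Γ, (Pi.single s 1 : Γ → k) = 1 := by
      have := Finset.univ_sum_single (1 : Γ → k)
      simpa using this
    rw [this, map_one]
  have hcov' : ∀ (j : Multiplicative (ZMod m)) (s : Γ),
      (u j : H) * e s = e (θ j s) * (u j : H) := by
    intro j s
    have hfun : (Pi.single s (1:k)) ∘ ⇑((θ j)⁻¹) = Pi.single (θ j s) 1 := by
      funext t
      simp only [Function.comp_apply, Pi.single_apply, MulAut.inv_def]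
      by_cases h : t = θ j s
      · subst h; simp
      · rw [if_neg h, if_neg]
        intro hc
        exact h (by rw [← (θ j).apply_symm_apply t, hc])
    have hc := hcov j (Pi.single s 1)
    rw [hfun] at hc
    simpa [he_def] using hc
  -- basic action identities
  have hmul_smul : ∀ (a b : H) (x : M), (a * b) • x = a • b • x := fun a b x => mul_smul a b x
  have hee : ∀ (s t : Γ) (x : M), e s • e t • x = if s = t then e t • x else 0 := by
    intro s t x
    rw [← hmul_smul, he_mul]
    split_ifs with h
    · rw [h]
    · rw [zero_smul]
  -- simplicity: cyclic generation
  have hsimp : ∀ x : M, x ≠ 0 → ∀ w : M, ∃ h : H, h • x = w := by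
    intro x hx w
    have htop : Submodule.span H {x} = ⊤ := by
      rcases hsimple.eq_bot_or_eq_top (Submodule.span H {x}) with h | h
      · exact absurd (h ▸ Submodule.mem_span_singleton_self x) (by simpa using hx)
      · exact h
    exact Submodule.mem_span_singleton.mp (htop ▸ Submodule.mem_top)
  have hiota : ∀ (F : Γ → k) (y : M), (ι F) • y = ∑ r : Γ, F r • (e r • y) := by
    intro F y
    have hF : ι F = ∑ r : Γ, F r • e r := by
      have h1 : ∀ r : Γ, F r • (Pi.single r 1 : Γ → k) = Pi.single r (F r) := by
        intro r; funext x; simp [Pi.single_apply]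
      calc ι F = ι (∑ r : Γ, Pi.single r (F r)) := by rw [Finset.univ_sum_single]
        _ = ∑ r : Γ, F r • e r := by
            rw [map_sum]; exact Finset.sum_congr rfl fun r _ => by rw [← h1, map_smul]
    rw [hF, Finset.sum_smul]
    exact Finset.sum_congr rfl fun r _ => smul_assoc (F r) (e r) y
  -- finite dimensionality of M
  haveI : Nontrivial M := IsSimpleModule.nontrivial H M
  obtain ⟨x₀, hx₀⟩ := exists_ne (0 : M)
  haveI : Module.Finite k M := by
    let g : ZMod m × Γ → M := fun p => e p.2 • ((u (Multiplicative.ofAdd p.1) : H) • x₀)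
    apply Module.Finite.of_surjective (Fintype.linearCombination k g)
    intro wgt
    obtain ⟨h, hh⟩ := hsimp x₀ hx₀ wgt
    obtain ⟨F, hF⟩ := hfree.surjective h
    refine ⟨fun p => F p.1 p.2, ?_⟩
    rw [Fintype.linearCombination_apply]
    simp only [g]
    rw [Fintype.sum_prod_type]
    rw [← hh, ← hF]
    rw [Finset.sum_smul]
    refine Finset.sum_congr rfl fun j _ => ?_
    rw [hmul_smul, hiota]
  -- find a nonzero weight vector
  have hx₀sum : ∑ s : Γ, e s • x₀ = x₀ := by
    rw [← Finset.sum_smul, he_sum, one_smul]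
  have : ∃ s : Γ, e s • x₀ ≠ 0 := by
    by_contra hc
    push_neg at hc
    exact hx₀ (by rw [← hx₀sum, Finset.sum_eq_zero fun s _ => hc s])
  obtain ⟨s₀, hs₀⟩ := this
  -- the stabilizer subgroup
  let C : Subgroup (Multiplicative (ZMod m)) :=
    { carrier := {c | θ c s₀ = s₀}
      one_mem' := by simp
      mul_mem' := by
        intro a b ha hb
        simp only [Set.mem_setOf_eq, map_mul, MulAut.mul_apply] at *
        rw [hb, ha]
      inv_mem' := by
        intro a ha
        simp only [Set.mem_setOf_eq, map_inv, MulAut.inv_def] at *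
        rw [MulEquiv.symm_apply_eq, ha] }
  have hCmem : ∀ c : Multiplicative (ZMod m), c ∈ C ↔ θ c s₀ = s₀ := fun c => Iff.rfl
  -- cyclic generator of C
  obtain ⟨cgen, hcgen⟩ := IsCyclic.exists_generator (α := ↥C)
  set c₀ : Multiplicative (ZMod m) := (cgen : Multiplicative (ZMod m)) with hc₀
  -- the weight space N s₀ as a k-submodule
  let N : Submodule k M :=
    { carrier := {x | e s₀ • x = x}
      add_mem' := by intro a b ha hb; simp only [Set.mem_setOf_eq] at *; rw [smul_add, ha, hb]
      zero_mem' := by simp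
      smul_mem' := by
        intro c x hx; simp only [Set.mem_setOf_eq] at *
        rw [smul_comm, hx] }
  have hc₀C : θ c₀ s₀ = s₀ := cgen.2
  have hNmem : ∀ x : M, x ∈ N ↔ e s₀ • x = x := fun x => Iff.rfl
  haveI : Nontrivial ↥N := by
    refine ⟨⟨⟨e s₀ • x₀, ?_⟩, 0, ?_⟩⟩
    · rw [hNmem, hee, if_pos rfl]
    · simpa [Subtype.ext_iff] using hs₀
  -- u c₀ preserves N
  have hpres : ∀ x : M, x ∈ N → (u c₀ : H) • x ∈ N := by
    intro x hx
    rw [hNmem] at hx ⊢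
    have hsw : (u c₀ : H) * e s₀ = e s₀ * (u c₀ : H) := by
      have := hcov' c₀ s₀; rwa [hc₀C] at this
    calc e s₀ • ((u c₀ : H) • x) = (e s₀ * (u c₀ : H)) • x := (hmul_smul _ _ _).symm
      _ = ((u c₀ : H) * e s₀) • x := by rw [hsw]
      _ = (u c₀ : H) • (e s₀ • x) := hmul_smul _ _ _
      _ = (u c₀ : H) • x := by rw [hx]
  -- an eigenvector of u c₀ on N
  let T : Module.End k ↥N :=
    { toFun := fun x => ⟨(u c₀ : H) • (x : M), hpres _ x.2⟩
      map_add' := by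
        intro a b
        refine Subtype.ext ?_
        show (u c₀ : H) • ((a : M) + b) = (u c₀ : H) • a + (u c₀ : H) • b
        exact smul_add _ _ _
      map_smul' := by
        intro c a
        refine Subtype.ext ?_
        show (u c₀ : H) • (c • (a : M)) = c • ((u c₀ : H) • a)
        exact (smul_comm c _ _).symm }
  obtain ⟨lam, hlam⟩ := Module.End.exists_eigenvalue T
  obtain ⟨vv, hvv⟩ := hlam.exists_hasEigenvector
  set v : M := (vv : M) with hvdef
  have hvne : v ≠ 0 := fun hc => hvv.2 (Subtype.ext hc)
  have hvN : e s₀ • v = v := vv.2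
  have hveig : (u c₀ : H) • v = lam • v := by
    have := hvv.apply_eq_smul
    exact congrArg Subtype.val this
  -- powers of the eigenvalue
  have hupow : ∀ n : ℕ, ((u c₀ : H) ^ n) • v = lam ^ n • v := by
    intro n
    induction n with
    | zero => simp
    | succ n ih =>
      rw [pow_succ, hmul_smul, hveig, ← smul_comm, ih, smul_smul, ← pow_succ']
  have hCv : ∀ c ∈ C, ∃ μ : k, (u c : H) • v = μ • v := by
    intro c hc
    obtain ⟨n, hn⟩ := (Submonoid.mem_powers_iff _ _).mp
      (mem_powers_iff_mem_zpowers.mpr (hcgen ⟨c, hc⟩))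
    have hcn : c₀ ^ n = c := by
      have := congrArg Subtype.val hn
      simpa [hc₀] using this
    refine ⟨lam ^ n, ?_⟩
    rw [← hcn, map_pow, Units.val_pow_eq_pow_val, hupow]
  -- the orbit of s₀
  let O : Finset Γ := Finset.image (fun j : ZMod m => θ (Multiplicative.ofAdd j) s₀) Finset.univ
  have hs₀O : s₀ ∈ O := Finset.mem_image.mpr ⟨0, Finset.mem_univ _, by simp⟩
  let σ : Γ → Multiplicative (ZMod m) := fun t =>
    if h : ∃ j : Multiplicative (ZMod m), θ j s₀ = t then h.choose else 1
  have hσ : ∀ t ∈ O, θ (σ t) s₀ = t := by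
    intro t ht
    obtain ⟨j, _, hj⟩ := Finset.mem_image.mp ht
    have hex : ∃ jj : Multiplicative (ZMod m), θ jj s₀ = t := ⟨Multiplicative.ofAdd j, hj⟩
    simp only [σ, dif_pos hex]
    exact hex.choose_spec
  let w : ↥O → M := fun t => (u (σ ↑t) : H) • v
  have hwmem : ∀ t : ↥O, e ↑t • w t = w t := by
    intro t
    have h1 : (u (σ ↑t) : H) * e s₀ = e ↑t * (u (σ ↑t) : H) := by
      rw [hcov', hσ _ t.2]
    calc e ↑t • w t = (e ↑t * (u (σ ↑t) : H)) • v := (hmul_smul _ _ _).symm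
      _ = ((u (σ ↑t) : H) * e s₀) • v := by rw [h1]
      _ = (u (σ ↑t) : H) • (e s₀ • v) := hmul_smul _ _ _
      _ = w t := by rw [hvN]
  have hwne : ∀ t : ↥O, w t ≠ 0 := by
    intro t hc
    apply hvne
    have h2 : ((u (σ ↑t))⁻¹ : Hˣ) • (w t) = (0 : M) := by
      rw [hc, smul_zero]
    have h3 : (((u (σ ↑t))⁻¹ : Hˣ) : H) • ((u (σ ↑t) : H) • v) = (0 : M) := h2
    rwa [← hmul_smul, Units.inv_mul, one_smul] at h3
  have hw0 : ∀ (r : Γ) (t : ↥O), r ≠ ↑t → e r • w t = 0 := by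
    intro r t hne
    conv_lhs => rw [← hwmem t]
    rw [hee, if_neg hne]
  -- linear independence
  have hli : LinearIndependent k w := by
    rw [linearIndependent_iff']
    intro s c hsum i hi
    have h0 : e ↑i • (∑ t ∈ s, c t • w t) = 0 := by rw [hsum, smul_zero]
    rw [Finset.smul_sum] at h0
    have h2 : (∑ t ∈ s, e ↑i • (c t • w t)) = e ↑i • (c i • w i) :=
      Finset.sum_eq_single_of_mem i hi (fun t _ hne => by
        rw [smul_comm, hw0 ↑i t (fun hc => hne (Subtype.ext (by exact_mod_cast hc.symm))), smul_zero])
    rw [h2, smul_comm, hwmem] at h0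
    exact (smul_eq_zero.mp h0).resolve_right (hwne i)
  -- weights act diagonally on the w's
  have hιw : ∀ (F : Γ → k) (t : ↥O), ι F • w t = F ↑t • w t := by
    intro F t
    rw [hiota]
    rw [Finset.sum_eq_single_of_mem (↑t : Γ) (Finset.mem_univ _)
      (fun r _ hne => by rw [hw0 r t hne, smul_zero])]
    rw [hwmem]
  -- spanning
  have hsp : ⊤ ≤ Submodule.span k (Set.range w) := by
    intro x _
    obtain ⟨h, hh⟩ := hsimp v hvne x
    obtain ⟨F, hF⟩ := hfree.surjective h
    rw [← hh, ← hF, Finset.sum_smul]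
    apply Submodule.sum_mem
    intro j _
    rw [hmul_smul]
    set jG := Multiplicative.ofAdd j with hjG
    have htO : θ jG s₀ ∈ O := Finset.mem_image.mpr ⟨j, Finset.mem_univ _, rfl⟩
    set t : ↥O := ⟨θ jG s₀, htO⟩ with ht
    have hcC : (σ ↑t)⁻¹ * jG ∈ C := by
      rw [hCmem, map_mul, MulAut.mul_apply, map_inv, MulAut.inv_def, MulEquiv.symm_apply_eq,
        hσ _ t.2]
    obtain ⟨μ, hμ⟩ := hCv _ hcC
    have hjfact : jG = σ ↑t * ((σ ↑t)⁻¹ * jG) := by group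
    have huv : (u jG : H) • v = μ • w t := by
      conv_lhs => rw [hjfact]
      rw [map_mul, Units.val_mul, hmul_smul, hμ, smul_comm]
    have hterm : (ι (F j)) • ((u jG : H) • v) = (μ * F j ↑t) • w t := by
      rw [huv, smul_comm, hιw, smul_smul]
    rw [hterm]
    exact Submodule.smul_mem _ _ (Submodule.subset_span ⟨t, rfl⟩)
  -- the basis and the dimension
  let b : Module.Basis ↥O k M := Module.Basis.mk hli hsp
  have hfr : Module.finrank k M = O.card := by
    rw [Module.finrank_eq_card_basis b, Fintype.card_coe]
  -- counting: |O| divides m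
  have hθadd : ∀ (x y : ZMod m), θ (Multiplicative.ofAdd (x + y)) s₀
      = θ (Multiplicative.ofAdd x) (θ (Multiplicative.ofAdd y) s₀) := by
    intro x y
    rw [ofAdd_add, map_mul, MulAut.mul_apply]
  have hfib : ∀ t ∈ O,
      (Finset.univ.filter (fun j : ZMod m => θ (Multiplicative.ofAdd j) s₀ = t)).card
      = (Finset.univ.filter (fun j : ZMod m => θ (Multiplicative.ofAdd j) s₀ = s₀)).card := by
    intro t ht
    set a : ZMod m := Multiplicative.toAdd (σ t) with ha
    have haσ : Multiplicative.ofAdd a = σ t := ofAdd_toAdd (σ t)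
    refine Finset.card_bij' (fun j _ => j - a) (fun j _ => j + a) ?_ ?_ ?_ ?_
    · intro j hj
      rw [Finset.mem_filter] at hj ⊢
      refine ⟨Finset.mem_univ _, ?_⟩
      show θ (Multiplicative.ofAdd (j - a)) s₀ = s₀
      have h5 : j - a = (-a) + j := by ring
      rw [h5, hθadd, hj.2, ofAdd_neg, haσ, map_inv, MulAut.inv_def, MulEquiv.symm_apply_eq,
        hσ t ht]
    · intro j hj
      rw [Finset.mem_filter] at hj ⊢
      refine ⟨Finset.mem_univ _, ?_⟩
      show θ (Multiplicative.ofAdd (j + a)) s₀ = t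
      have h5 : j + a = a + j := by ring
      rw [h5, hθadd, hj.2, haσ]
      exact hσ t ht
    · intro j _; ring
    · intro j _; ring
  have hcount' : Fintype.card (ZMod m) = O.card *
      (Finset.univ.filter (fun j : ZMod m => θ (Multiplicative.ofAdd j) s₀ = s₀)).card := by
    rw [← Finset.card_univ,
      Finset.card_eq_sum_card_fiberwise
        (f := fun j : ZMod m => θ (Multiplicative.ofAdd j) s₀) (t := O)
        (fun j _ => Finset.mem_image.mpr ⟨j, Finset.mem_univ _, rfl⟩),
      Finset.sum_congr rfl hfib, Finset.sum_const, smul_eq_mul]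
  have hcount : m = O.card *
      (Finset.univ.filter (fun j : ZMod m => θ (Multiplicative.ofAdd j) s₀ = s₀)).card :=
    (ZMod.card m).symm.trans hcount'
  rw [hfr]
  exact ⟨_, hcount⟩
end

section
/- Let G and G' be finite groups, χ an irreducible character of degree 2 of G over ℂ, and suppose χχ* decomposes as 1 + g + λ where g is a linear character of order 2 and λ is irreducible of degree 2 (here χ* is the dual character). Then gλ = λ; that is, g stabilizes λ under multiplication. -/
open CategoryTheory Module

noncomputable section Stmt17Aux

namespace Stmt17Aux

open FDRep Representation

variable {G : Type} [Group G]

/-- The representation `X` twisted by a linear character `g`. -/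
def twist (g : G →* ℂˣ) (X : FDRep ℂ G) : FDRep ℂ G :=
  FDRep.of
    { toFun := fun x => (g x : ℂ) • X.ρ x
      map_one' := by simp
      map_mul' := fun x y => by
        simp only [map_mul, Units.val_mul, mul_smul]
        rw [smul_mul_assoc, mul_smul_comm] }

lemma twist_char (g : G →* ℂˣ) (X : FDRep ℂ G) (x : G) :
    (twist g X).character x = (g x : ℂ) * X.character x := by
  show LinearMap.trace ℂ _ ((g x : ℂ) • X.ρ x) = (g x : ℂ) * X.character x
  rw [map_smul, smul_eq_mul]
  rfl

lemma finrank_invariants_eq (X Y : FDRep ℂ G) :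
    finrank ℂ ((Representation.linHom X.ρ Y.ρ).invariants) = finrank ℂ (X ⟶ Y) :=
  (Representation.linHom.invariantsEquivFDRepHom (k := ℂ) (G := G) X Y).finrank_eq

lemma avg_char [Fintype G] [Invertible (Fintype.card G : ℂ)] (X Y : FDRep ℂ G) :
    ⅟(Fintype.card G : ℂ) • ∑ x : G, X.character x * Y.character x⁻¹ =
      finrank ℂ (Y ⟶ X) := by
  conv_lhs =>
    enter [2, 2, x]
    rw [mul_comm, ← FDRep.char_dual, ← Pi.mul_apply, ← FDRep.char_tensor]
    rw [FDRep.char_iso (FDRep.dualTensorIsoLinHom Y.ρ X)]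
  rw [smul_eq_mul, invOf_eq_inv, Fintype.card_eq_nat_card, FDRep.average_char_eq_finrank_invariants]
  rw [show (FDRep.of (linHom Y.ρ X.ρ)).ρ = linHom Y.ρ X.ρ from FDRep.of_ρ' _]
  exact_mod_cast congrArg (Nat.cast : ℕ → ℂ) (finrank_invariants_eq Y X)

lemma isIso_of_mono_of_finrank {X Y : FDRep ℂ G} (f : X ⟶ Y) [Mono f]
    (h : finrank ℂ X = finrank ℂ Y) : IsIso f := by
  have hm : Mono f.hom := (Action.forget (FGModuleCat ℂ) (MonCat.of G)).map_mono f
  have hm2 : Mono ((forget₂ (FGModuleCat ℂ) (ModuleCat ℂ)).map f.hom) :=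
    (forget₂ (FGModuleCat ℂ) (ModuleCat ℂ)).map_mono f.hom
  have hinj : Function.Injective f.hom :=
    (ModuleCat.mono_iff_injective ((forget₂ (FGModuleCat ℂ) (ModuleCat ℂ)).map f.hom)).mp hm2
  have hbij : Function.Bijective f.hom :=
    ⟨hinj, (LinearMap.injective_iff_surjective_of_finrank_eq_finrank h).mp hinj⟩
  have : IsIso f.hom := by
    let e : (X : Type) ≃ₗ[ℂ] (Y : Type) := LinearEquiv.ofBijective _ hbij
    have he : f.hom = e.toFGModuleCatIso.hom := rfl
    rw [he]
    infer_instance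
  exact Action.isIso_of_hom_isIso f

end Stmt17Aux

end Stmt17Aux

/-- Let `χ` be an irreducible complex character of degree `2` of a finite
group `G` (character of a simple `2`-dimensional representation `V`), and suppose
`χχ* = 1 + g + λ` where `g` is a linear character of order `2` and `λ` is an irreducible
character of degree `2` (of a simple representation `W`); here `χ*(x) = χ(x⁻¹)` is the
dual character.  Then `gλ = λ`. -/
theorem stmt_17 (G : Type) [Group G] [Finite G]
    (V W : FDRep ℂ G) [Simple V] [Simple W]
    (hV : finrank ℂ V = 2) (hW : finrank ℂ W = 2)
    (g : G →* ℂˣ) (hg1 : g ≠ 1) (hg2 : g * g = 1)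
    (hdecomp : ∀ x : G,
      V.character x * V.character x⁻¹ = 1 + (g x : ℂ) + W.character x) :
    ∀ x : G, (g x : ℂ) * W.character x = W.character x := by
  obtain ⟨_⟩ := nonempty_fintype G
  have hcard : (Fintype.card G : ℂ) ≠ 0 := Nat.cast_ne_zero.mpr Fintype.card_pos.ne'
  have hinv : Invertible (Fintype.card G : ℂ) := invertibleOfNonzero hcard
  -- basic facts about g
  have hgsq : ∀ x : G, (g x : ℂ) * (g x : ℂ) = 1 := by
    intro x
    have h : (g * g) x = (1 : G →* ℂˣ) x := by rw [hg2]
    simp only [MonoidHom.mul_apply, MonoidHom.one_apply] at h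
    simpa using congrArg Units.val h
  -- sum of the nontrivial character g is zero
  have hb : ∑ x : G, (g x : ℂ) = 0 := by
    obtain ⟨y, hy⟩ : ∃ y, g y ≠ 1 := by
      by_contra h; push_neg at h; exact hg1 (MonoidHom.ext fun y => h y)
    have hy' : (g y : ℂ) ≠ 1 := fun h => hy (Units.ext h)
    have h1 : ∑ x : G, (g (y * x) : ℂ) = ∑ x : G, (g x : ℂ) :=
      Equiv.sum_comp (Equiv.mulLeft y) (fun x => (g x : ℂ))
    have h2 : ∑ x : G, (g (y * x) : ℂ) = (g y : ℂ) * ∑ x : G, (g x : ℂ) := by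
      rw [Finset.mul_sum]
      exact Finset.sum_congr rfl fun x _ => by rw [map_mul]; push_cast; ring
    have h3 : ((g y : ℂ) - 1) * ∑ x : G, (g x : ℂ) = 0 := by
      linear_combination h2.symm.trans h1
    exact (mul_eq_zero.mp h3).resolve_left (sub_ne_zero.mpr hy')
  set Vg := Stmt17Aux.twist g V with hVgdef
  set Wg := Stmt17Aux.twist g W with hWgdef
  -- the dimension of the invariants of Wg
  set n := finrank ℂ (Representation.invariants Wg.ρ) with hndef
  have hd : ∑ x : G, (g x : ℂ) * W.character x = (Fintype.card G : ℂ) * n := by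
    have h := FDRep.average_char_eq_finrank_invariants Wg
    have h2 : ∑ x : G, Wg.character x = ∑ x : G, (g x : ℂ) * W.character x :=
      Finset.sum_congr rfl fun x _ => Stmt17Aux.twist_char g W x
    rw [h2] at h
    have := congrArg (fun z => (Fintype.card G : ℂ) * z) h
    simpa [smul_eq_mul, ← mul_assoc, mul_invOf_self] using this
  -- the dimension of Hom(V, Vg)
  set m := finrank ℂ (V ⟶ Vg) with hmdef
  have hA : (m : ℂ) = 1 + n := by
    have h := Stmt17Aux.avg_char Vg V
    have h2 : ∑ x : G, Vg.character x * V.character x⁻¹ =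
        ∑ x : G, ((g x : ℂ) + ((g x : ℂ) * (g x : ℂ)) + (g x : ℂ) * W.character x) := by
      refine Finset.sum_congr rfl fun x _ => ?_
      rw [Stmt17Aux.twist_char g V x, mul_assoc, hdecomp x]
      ring
    rw [h2] at h
    rw [Finset.sum_add_distrib, Finset.sum_add_distrib, hb, hd] at h
    have h3 : ∑ x : G, ((g x : ℂ) * (g x : ℂ)) = (Fintype.card G : ℂ) := by
      rw [Finset.sum_congr rfl fun x _ => hgsq x]
      simp [Finset.card_univ]
    rw [h3] at h
    rw [← h]
    rw [smul_eq_mul]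
    field_simp
    rw [zero_add, mul_add, ← mul_assoc, invOf_eq_inv, inv_mul_cancel₀ hcard]
    ring
  have hm1 : m = 1 + n := by exact_mod_cast hA
  -- there is a nonzero hom V ⟶ Vg
  have hmpos : 0 < m := by omega
  have : Nontrivial (V ⟶ Vg) := Module.nontrivial_of_finrank_pos hmpos
  obtain ⟨f, hf⟩ := exists_ne (0 : V ⟶ Vg)
  have : Mono f := CategoryTheory.mono_of_nonzero_from_simple hf
  have : IsIso f := Stmt17Aux.isIso_of_mono_of_finrank f rfl
  have hchar : V.character = Vg.character := FDRep.char_iso (asIso f)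
  -- conclude
  intro x
  have hchi : (g x : ℂ) * V.character x = V.character x := by
    have := congrFun hchar x
    rw [Stmt17Aux.twist_char g V x] at this
    exact this.symm
  have h1 := hdecomp x
  have h3 := hgsq x
  linear_combination V.character x⁻¹ * hchi - h3 - ((g x : ℂ) - 1) * h1
end
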